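/- Let N ∈ ℕ, let K : Fin N → Fin N → ℂ be a kernel, let F : Finset (Fin N) → ℂ be an arbitrary coefficient function (independent of z), and define W(z) = ∑_{α ⊆ univ} F(α) · ρ(z, univ \ α), the sum running over all subsets α of Fin N. Fix k ∈ Fin N. Then W is an affine function of z k, and for all s, t ∈ ℂ and z : Fin N → ℂ, W(Function.update z k t) − W(Function.update z k s) = (t − s) · ∑_{α ⊆ univ \ {k}} F(α) · ρ(z^mod, (univ \ {k}) \ α), where z^mod i = z i + K i k. (This is the recursion ∂W_N({u}_N)/∂z_k = a_k · W^{mod}_{N−1}({u}_N / u_k) of the paper, with the modification rule z_i → z_i + φ(u_i, u_k).) -/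

import Mathlib

open Finset

/-- The symmetric-scheme Gaudin determinant: the determinant of the square matrix
indexed by `α` whose `(j,j)` entry is `z j + ∑_{l ∈ α, l ≠ j} K j l` and whose
`(j,k)` entry for `j ≠ k` is `-(K j k)`. By convention it equals `1` on `α = ∅`. -/
noncomputable def gaudin {N : ℕ} (K : Fin N → Fin N → ℂ) (z : Fin N → ℂ)
    (α : Finset (Fin N)) : ℂ :=
  Matrix.det (Matrix.of fun j k : α =>
    if j = k then z j + ∑ l ∈ α.erase (j : Fin N), K j l else -K (j : Fin N) (k : Fin N))

lemma gaudin_update_of_not_mem {N : ℕ} (K : Fin N → Fin N → ℂ) (z : Fin N → ℂ)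
    (k : Fin N) (c : ℂ) (β : Finset (Fin N)) (hk : k ∉ β) :
    gaudin K (Function.update z k c) β = gaudin K z β := by
  unfold gaudin
  congr 1
  ext j l
  have hj : (j : Fin N) ≠ k := fun h => hk (h ▸ j.2)
  simp [Matrix.of_apply, Function.update_of_ne hj]

def gaudinEquiv {N : ℕ} {k : Fin N} {β : Finset (Fin N)} (hk : k ∈ β) :
    {x // x ∈ β.erase k} ⊕ Unit ≃ {x // x ∈ β} where
  toFun := Sum.elim (fun j => ⟨j, Finset.mem_of_mem_erase j.2⟩) (fun _ => ⟨k, hk⟩)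
  invFun j := if h : (j : Fin N) = k then Sum.inr ()
    else Sum.inl ⟨j, Finset.mem_erase.2 ⟨h, j.2⟩⟩
  left_inv := by
    rintro (⟨j, hj⟩ | ⟨⟩)
    · simp [(Finset.mem_erase.1 hj).1]
    · simp
  right_inv := by
    rintro ⟨j, hj⟩
    by_cases h : j = k
    · subst h; simp
    · simp [h]

lemma gaudin_update_sub {N : ℕ} (K : Fin N → Fin N → ℂ) (z : Fin N → ℂ)
    (k : Fin N) (s t : ℂ) (β : Finset (Fin N)) (hk : k ∈ β) :
    gaudin K (Function.update z k t) β - gaudin K (Function.update z k s) β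
      = (t - s) * gaudin K (fun i => z i + K i k) (β.erase k) := by
  classical
  set k0 : {x // x ∈ β} := ⟨k, hk⟩ with hk0
  set M : ℂ → Matrix {x // x ∈ β} {x // x ∈ β} ℂ := fun c =>
    Matrix.of fun j l : β =>
      if j = l then Function.update z k c j + ∑ l' ∈ β.erase (j : Fin N), K j l'
      else -K (j : Fin N) (l : Fin N) with hM
  set e1 : {x // x ∈ β} → ℂ := Pi.single k0 1 with he1
  have hMt : M t = Matrix.updateRow (M s) k0
      (fun l => M s k0 l + (t - s) • e1 l) := by
    ext j l
    rw [Matrix.updateRow_apply]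
    by_cases hj : j = k0
    · rw [if_pos hj, ← hj]
      have hjv : (j : Fin N) = k := congrArg Subtype.val hj
      simp only [hM, Matrix.of_apply, he1, Pi.single_apply, smul_eq_mul]
      by_cases hl : j = l
      · rw [if_pos hl, if_pos hl, if_pos (hl ▸ hj), hjv, Function.update_self,
          Function.update_self]
        ring
      · rw [if_neg hl, if_neg hl, if_neg (fun h => hl (hj.trans h.symm)), mul_zero,
          add_zero]
    · rw [if_neg hj]
      have hjk : (j : Fin N) ≠ k := fun h => hj (Subtype.ext h)
      simp only [hM, Matrix.of_apply, Function.update_of_ne hjk]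
  have h1 : (M t).det = (M s).det + (t - s) *
      (Matrix.updateRow (M s) k0 e1).det := by
    rw [hMt]
    have := Matrix.det_updateRow_add (M s) k0 (fun l => M s k0 l)
      (fun l => (t - s) • e1 l)
    rw [show (fun l => M s k0 l + (t - s) • e1 l)
        = ((fun l => M s k0 l) + fun l => (t - s) • e1 l) from rfl, this]
    congr 1
    · rw [show (fun l => M s k0 l) = M s k0 from rfl, Matrix.updateRow_eq_self]
    · rw [show (fun l => (t - s) • e1 l) = ((t - s) • e1) from rfl,
        Matrix.det_updateRow_smul]
  -- the minor
  set A : Matrix {x // x ∈ β.erase k} {x // x ∈ β.erase k} ℂ :=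
    Matrix.of fun j l : β.erase k =>
      if j = l then (z j + K j k) + ∑ l' ∈ (β.erase k).erase (j : Fin N), K j l'
      else -K (j : Fin N) (l : Fin N) with hA
  have hminor : (Matrix.updateRow (M s) k0 e1).det = A.det := by
    rw [← Matrix.det_submatrix_equiv_self (gaudinEquiv hk)]
    have heq : (Matrix.updateRow (M s) k0 e1).submatrix
        (gaudinEquiv hk) (gaudinEquiv hk)
        = Matrix.fromBlocks A (Matrix.of fun j (_ : Unit) => -K (j : Fin N) k) 0 1 := by
      ext j l
      rcases j with j | j <;> rcases l with l | l
      · -- inl inl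
        have hjk : ((j : Fin N)) ≠ k := (Finset.mem_erase.1 j.2).1
        have hj' : (⟨(j : Fin N), Finset.mem_of_mem_erase j.2⟩ : {x // x ∈ β}) ≠ k0 :=
          fun h => hjk (congrArg Subtype.val h)
        simp only [Matrix.submatrix_apply, gaudinEquiv, Equiv.coe_fn_mk, Sum.elim_inl,
          Matrix.updateRow_ne hj', hM, hA, Matrix.of_apply, Matrix.fromBlocks_apply₁₁,
          Subtype.ext_iff]
        by_cases hjl : (j : Fin N) = (l : Fin N)
        · rw [if_pos hjl, if_pos hjl, Function.update_of_ne hjk]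
          have hkmem : k ∈ β.erase (j : Fin N) := Finset.mem_erase.2 ⟨Ne.symm hjk, hk⟩
          rw [← Finset.add_sum_erase _ _ hkmem, Finset.erase_right_comm]
          ring
        · rw [if_neg hjl, if_neg hjl]
      · -- inl inr : column k
        have hjk : ((j : Fin N)) ≠ k := (Finset.mem_erase.1 j.2).1
        have hj' : (⟨(j : Fin N), Finset.mem_of_mem_erase j.2⟩ : {x // x ∈ β}) ≠ k0 :=
          fun h => hjk (congrArg Subtype.val h)
        simp only [Matrix.submatrix_apply, gaudinEquiv, Equiv.coe_fn_mk, Sum.elim_inl,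
          Sum.elim_inr, Matrix.updateRow_ne hj', hM, Matrix.of_apply,
          Matrix.fromBlocks_apply₁₂]
        rw [if_neg hj']
      · -- inr inl : zero row
        have hlk : ((l : Fin N)) ≠ k := (Finset.mem_erase.1 l.2).1
        have hl' : (⟨(l : Fin N), Finset.mem_of_mem_erase l.2⟩ : {x // x ∈ β}) ≠ k0 :=
          fun h => hlk (congrArg Subtype.val h)
        simp only [Matrix.submatrix_apply, gaudinEquiv, Equiv.coe_fn_mk, Sum.elim_inr,
          Sum.elim_inl, ← hk0, Matrix.updateRow_self, Matrix.fromBlocks_apply₂₁, he1]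
        rw [Pi.single_eq_of_ne hl']
        simp
      · -- inr inr
        simp [gaudinEquiv, ← hk0, Matrix.updateRow_self, he1, Pi.single_eq_same,
          Matrix.one_apply]
    rw [heq, Matrix.det_fromBlocks_zero₂₁]
    simp
  have hgt : gaudin K (Function.update z k t) β = (M t).det := rfl
  have hgs : gaudin K (Function.update z k s) β = (M s).det := rfl
  have hge : gaudin K (fun i => z i + K i k) (β.erase k) = A.det := rfl
  rw [hgt, hgs, hge, h1, hminor]
  ring

/-- The recursion relation for `W(z) = ∑_{α ⊆ univ} F(α) · ρ(z, univ \ α)`: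
`W` is affine in `z k`, and
`W(update z k t) − W(update z k s)
   = (t − s) · ∑_{α ⊆ univ \ {k}} F(α) · ρ(z^mod, (univ \ {k}) \ α)`,
where `z^mod i = z i + K i k`. -/
theorem gaudin_sum_recursion {N : ℕ} (K : Fin N → Fin N → ℂ)
    (F : Finset (Fin N) → ℂ) (k : Fin N) (s t : ℂ) (z : Fin N → ℂ) :
    (∑ α ∈ (Finset.univ : Finset (Fin N)).powerset,
        F α * gaudin K (Function.update z k t) (Finset.univ \ α))
      - (∑ α ∈ (Finset.univ : Finset (Fin N)).powerset,
        F α * gaudin K (Function.update z k s) (Finset.univ \ α))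
      = (t - s) * ∑ α ∈ ((Finset.univ : Finset (Fin N)) \ {k}).powerset,
          F α * gaudin K (fun i => z i + K i k)
            (((Finset.univ : Finset (Fin N)) \ {k}) \ α) := by
  classical
  rw [← Finset.sum_sub_distrib]
  have hsub : ((Finset.univ : Finset (Fin N)) \ {k}).powerset
      ⊆ (Finset.univ : Finset (Fin N)).powerset :=
    Finset.powerset_mono.2 Finset.sdiff_subset
  have h0 : ∀ α ∈ (Finset.univ : Finset (Fin N)).powerset,
      α ∉ ((Finset.univ : Finset (Fin N)) \ {k}).powerset →
      F α * gaudin K (Function.update z k t) (Finset.univ \ α)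
        - F α * gaudin K (Function.update z k s) (Finset.univ \ α) = 0 := by
    intro α _ hα'
    have hk2 : k ∈ α := by
      by_contra h
      exact hα' (Finset.mem_powerset.2 (fun x hx => Finset.mem_sdiff.2
        ⟨Finset.mem_univ x, fun hs => h ((Finset.mem_singleton.1 hs) ▸ hx)⟩))
    have hknot : k ∉ Finset.univ \ α := fun h => (Finset.mem_sdiff.1 h).2 hk2
    rw [gaudin_update_of_not_mem K z k t _ hknot,
      gaudin_update_of_not_mem K z k s _ hknot, sub_self]
  rw [← Finset.sum_subset hsub h0, Finset.mul_sum]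
  apply Finset.sum_congr rfl
  intro α hα
  have hαk : k ∉ α := fun h =>
    (Finset.mem_sdiff.1 (Finset.mem_powerset.1 hα h)).2 (Finset.mem_singleton_self k)
  have hk' : k ∈ Finset.univ \ α := Finset.mem_sdiff.2 ⟨Finset.mem_univ k, hαk⟩
  rw [← mul_sub, gaudin_update_sub K z k s t _ hk', Finset.erase_eq, sdiff_right_comm]
  ring
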